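/- Let a, b, c, d > 0, T > 0, and let x, y : ℝ → ℝ be differentiable T-periodic functions with x(t) > 0 and y(t) > 0 for all t, satisfying x'(t) = a − b·x(t) − x(t)·y(t) and y'(t) = c − d·y(t) + x(t)·y(t) for all t ∈ ℝ. Then x and y are constant functions. -/

import Mathlib

/-- The system `ẋ = a − bx − xy`, `ẏ = c − dy + xy` with `a, b, c, d > 0` has no
nonconstant positive periodic solution. -/
theorem stmt_4 (a b c d T : ℝ) (ha : 0 < a) (hb : 0 < b) (hc : 0 < c) (hd : 0 < d)
    (hT : 0 < T) (x y : ℝ → ℝ)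
    (hx : Differentiable ℝ x) (hy : Differentiable ℝ y)
    (hxper : Function.Periodic x T) (hyper : Function.Periodic y T)
    (hxpos : ∀ t : ℝ, 0 < x t) (hypos : ∀ t : ℝ, 0 < y t)
    (hxd : ∀ t : ℝ, deriv x t = a - b * x t - x t * y t)
    (hyd : ∀ t : ℝ, deriv y t = c - d * y t + x t * y t) :
    (∀ t : ℝ, x t = x 0) ∧ (∀ t : ℝ, y t = y 0) := by
  -- construct the positive equilibrium (xs, ys)
  obtain ⟨xs, ys, hxs, hys, he1, he2⟩ :
      ∃ xs ys : ℝ, 0 < xs ∧ 0 < ys ∧ a - b * xs - xs * ys = 0 ∧ c - d * ys + xs * ys = 0 := by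
    have hdisc : 0 ≤ (a + c + b * d) ^ 2 - 4 * a * b * d := by
      nlinarith [sq_nonneg (a - b * d), sq_nonneg c, mul_pos hc (add_pos ha (mul_pos hb hd))]
    set s := Real.sqrt ((a + c + b * d) ^ 2 - 4 * a * b * d) with hs_def
    have hs2 : s ^ 2 = (a + c + b * d) ^ 2 - 4 * a * b * d := Real.sq_sqrt hdisc
    have hsnn : 0 ≤ s := Real.sqrt_nonneg _
    have hslt : s < a + c + b * d := by
      have hu : 0 < a + c + b * d := by positivity
      nlinarith [hu, mul_pos (mul_pos ha hb) hd, sq_nonneg (s - (a + c + b * d))]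
    have hsgt : c + b * d - a < s := by
      nlinarith [mul_pos ha hc, sq_nonneg (s + (c + b * d - a))]
    set xs := (a + c + b * d - s) / (2 * b) with hxs_def
    have hxs : 0 < xs := by
      apply div_pos (by linarith) (by linarith)
    have hxsne : xs ≠ 0 := ne_of_gt hxs
    have h2b : 2 * b * xs = a + c + b * d - s := by
      rw [hxs_def]
      field_simp
    have hquad : b * xs ^ 2 - (a + c + b * d) * xs + a * d = 0 := by
      have h4 : 4 * b * (b * xs ^ 2 - (a + c + b * d) * xs + a * d)
          = (2 * b * xs) ^ 2 - 2 * (a + c + b * d) * (2 * b * xs) + 4 * a * b * d := by ring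
      nlinarith [h4, h2b, hs2]
    set ys := a / xs - b with hys_def
    have hys : 0 < ys := by
      rw [hys_def, sub_pos, lt_div_iff₀ hxs]
      nlinarith [h2b]
    refine ⟨xs, ys, hxs, hys, ?_, ?_⟩
    · rw [hys_def]; field_simp; ring
    · rw [hys_def]
      field_simp
      nlinarith [hquad]
  have hxne : ∀ t, x t ≠ 0 := fun t => ne_of_gt (hxpos t)
  have hyne : ∀ t, y t ≠ 0 := fun t => ne_of_gt (hypos t)
  -- the Lyapunov function
  set V : ℝ → ℝ := fun t => x t + y t - xs * Real.log (x t) - ys * Real.log (y t) with hV_def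
  set D : ℝ → ℝ := fun t =>
    -(a * (x t - xs) ^ 2 / (x t * xs) + c * (y t - ys) ^ 2 / (y t * ys)) with hD_def
  have hV' : ∀ t, HasDerivAt V (D t) t := by
    intro t
    have hdx : HasDerivAt x (deriv x t) t := (hx t).hasDerivAt
    have hdy : HasDerivAt y (deriv y t) t := (hy t).hasDerivAt
    have hlx : HasDerivAt (fun u => Real.log (x u)) ((x t)⁻¹ * deriv x t) t :=
      (Real.hasDerivAt_log (hxne t)).comp t hdx
    have hly : HasDerivAt (fun u => Real.log (y u)) ((y t)⁻¹ * deriv y t) t :=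
      (Real.hasDerivAt_log (hyne t)).comp t hdy
    have h : HasDerivAt V
        (deriv x t + deriv y t - xs * ((x t)⁻¹ * deriv x t) - ys * ((y t)⁻¹ * deriv y t)) t :=
      ((hdx.add hdy).sub (hlx.const_mul xs)).sub (hly.const_mul ys)
    convert h using 1
    rw [hD_def, hxd t, hyd t]
    have hx0 := hxne t
    have hy0 := hyne t
    field_simp
    linear_combination (-(x t - xs) * x t * y t * ys) * he1 +
      (-(y t - ys) * x t * y t * xs) * he2
  have hDnonpos : ∀ t, D t ≤ 0 := by
    intro t
    rw [hD_def]
    simp only [neg_nonpos]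
    have h1 : 0 ≤ a * (x t - xs) ^ 2 / (x t * xs) :=
      div_nonneg (mul_nonneg ha.le (sq_nonneg _)) (mul_pos (hxpos t) hxs).le
    have h2 : 0 ≤ c * (y t - ys) ^ 2 / (y t * ys) :=
      div_nonneg (mul_nonneg hc.le (sq_nonneg _)) (mul_pos (hypos t) hys).le
    linarith
  have hVdiff : Differentiable ℝ V := fun t => (hV' t).differentiableAt
  have hVanti : Antitone V :=
    antitone_of_deriv_nonpos hVdiff (fun t => by rw [(hV' t).deriv]; exact hDnonpos t)
  have hVper : Function.Periodic V T := by
    intro t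
    simp only [hV_def, hxper t, hyper t]
  -- antitone + periodic ⇒ constant
  have hVconst : ∀ t, V t = V 0 := by
    intro t
    obtain ⟨n, hn⟩ := exists_nat_gt (|t| / T)
    have hnT : |t| < n * T := by rwa [div_lt_iff₀ hT] at hn
    obtain ⟨hlo, hhi⟩ := abs_lt.mp hnT
    have h1 : V (n * T) = V 0 := by
      have := (hVper.nat_mul n) 0
      simpa using this
    have h2 : V (-(n * T)) = V 0 := by
      simpa using ((hVper.nat_mul n) (-(n * T))).symm
    have hle1 : V (n * T) ≤ V t := hVanti hhi.le
    have hle2 : V t ≤ V (-(n * T)) := hVanti hlo.le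
    linarith [h1 ▸ hle1, h2 ▸ hle2]
  -- hence D ≡ 0
  have hD0 : ∀ t, D t = 0 := by
    intro t
    have hVeq : V = fun _ => V 0 := funext hVconst
    have h0 : HasDerivAt (fun _ : ℝ => V 0) (D t) t := hVeq ▸ hV' t
    have := h0.deriv
    rw [deriv_const] at this
    exact this.symm
  have hxeq : ∀ t, x t = xs := by
    intro t
    have h := hD0 t
    rw [hD_def] at h
    have h1 : 0 ≤ a * (x t - xs) ^ 2 / (x t * xs) :=
      div_nonneg (mul_nonneg ha.le (sq_nonneg _)) (mul_pos (hxpos t) hxs).le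
    have h2 : 0 ≤ c * (y t - ys) ^ 2 / (y t * ys) :=
      div_nonneg (mul_nonneg hc.le (sq_nonneg _)) (mul_pos (hypos t) hys).le
    have h3 : a * (x t - xs) ^ 2 / (x t * xs) = 0 := by
      simp only [neg_eq_zero] at h
      linarith
    have h4 : (x t - xs) ^ 2 = 0 := by
      by_contra hne
      have : 0 < (x t - xs) ^ 2 := lt_of_le_of_ne (sq_nonneg _) (Ne.symm hne)
      have : 0 < a * (x t - xs) ^ 2 / (x t * xs) :=
        div_pos (mul_pos ha this) (mul_pos (hxpos t) hxs)
      linarith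
    have := pow_eq_zero_iff (n := 2) (by norm_num) |>.mp h4
    linarith
  have hyeq : ∀ t, y t = ys := by
    intro t
    have h := hD0 t
    rw [hD_def] at h
    have h1 : 0 ≤ a * (x t - xs) ^ 2 / (x t * xs) :=
      div_nonneg (mul_nonneg ha.le (sq_nonneg _)) (mul_pos (hxpos t) hxs).le
    have h2 : 0 ≤ c * (y t - ys) ^ 2 / (y t * ys) :=
      div_nonneg (mul_nonneg hc.le (sq_nonneg _)) (mul_pos (hypos t) hys).le
    have h3 : c * (y t - ys) ^ 2 / (y t * ys) = 0 := by
      simp only [neg_eq_zero] at h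
      linarith
    have h4 : (y t - ys) ^ 2 = 0 := by
      by_contra hne
      have : 0 < (y t - ys) ^ 2 := lt_of_le_of_ne (sq_nonneg _) (Ne.symm hne)
      have : 0 < c * (y t - ys) ^ 2 / (y t * ys) :=
        div_pos (mul_pos hc this) (mul_pos (hypos t) hys)
      linarith
    have := pow_eq_zero_iff (n := 2) (by norm_num) |>.mp h4
    linarith
  exact ⟨fun t => by rw [hxeq t, hxeq 0], fun t => by rw [hyeq t, hyeq 0]⟩
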